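/- With D₀ the inductive limit operator on 𝒟 = ⋃_j I_j(Dom D_j) defined by D₀(I_jξ) = I_j(D_jξ) from a countable inductive system of densely defined self-adjoint operators D_j, the ranges of D₀ + i·id and D₀ − i·id, i.e. the sets {D₀x + ix : x ∈ 𝒟} and {D₀x − ix : x ∈ 𝒟}, are both dense in H. -/

import Mathlib

open scoped InnerProductSpace

open LinearPMap in
theorem aux_dense {E : Type*} [NormedAddCommGroup E] [InnerProductSpace ℂ E] [CompleteSpace E]
    {T : E →ₗ.[ℂ] E} (hT : IsSelfAdjoint T) {c : ℂ} (hc : (starRingEnd ℂ) c ≠ c) :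
    Dense {y : E | ∃ x : T.domain, y = T x + c • (x : E)} := by
  have hT' : T† = T := hT
  have hTdense : Dense (T.domain : Set E) := hT.dense_domain
  set K : Submodule ℂ E := LinearMap.range (T.toFun + c • T.domain.subtype) with hK
  have hset : {y : E | ∃ x : T.domain, y = T x + c • (x : E)} = (K : Set E) := by
    ext y
    constructor
    · rintro ⟨x, rfl⟩; exact ⟨x, rfl⟩
    · rintro ⟨x, rfl⟩; exact ⟨x, rfl⟩
  rw [hset]
  have hKbot : Kᗮ = ⊥ := by
    rw [Submodule.eq_bot_iff]
    intro y hy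
    have hy' : ∀ x : T.domain, (inner ℂ (T x + c • (x : E)) y : ℂ) = 0 := fun x =>
      (Submodule.mem_orthogonal K y).1 hy _ ⟨x, rfl⟩
    have hw : ∀ x : T.domain, (inner ℂ ((-(starRingEnd ℂ c)) • y) (x : E) : ℂ) = inner ℂ y (T x) := by
      intro x
      have h1 := hy' x
      rw [inner_add_left, inner_smul_left] at h1
      have h2 : (inner ℂ (T x) y : ℂ) = -(starRingEnd ℂ c) * inner ℂ (x : E) y := by
        linear_combination h1
      have h3 := congrArg (starRingEnd ℂ) h2
      simp only [map_mul, _root_.map_neg, Complex.conj_conj, inner_conj_symm] at h3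
      rw [inner_smul_left, _root_.map_neg, Complex.conj_conj]
      exact h3.symm
    have hmem : y ∈ T†.domain := mem_adjoint_domain_of_exists y ⟨_, hw⟩
    have happ : T† ⟨y, hmem⟩ = (-(starRingEnd ℂ c)) • y := adjoint_apply_eq hTdense _ hw
    have hmem' : y ∈ T.domain := hT' ▸ hmem
    have happ' : T ⟨y, hmem'⟩ = (-(starRingEnd ℂ c)) • y := by
      rw [← happ]; exact ((LinearPMap.ext_iff.mp hT').2 (x := y) (hf := hmem) (hg := hmem')).symm
    have hsymm := adjoint_isFormalAdjoint (T := T) hTdense ⟨y, hmem⟩ ⟨y, hmem'⟩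
    rw [happ, happ'] at hsymm
    rw [inner_smul_left, inner_smul_right, _root_.map_neg, Complex.conj_conj] at hsymm
    have hsymm' : -c * (inner ℂ y y : ℂ) = -(starRingEnd ℂ c) * inner ℂ y y := hsymm
    have hfac : ((starRingEnd ℂ) c - c) * (inner ℂ y y : ℂ) = 0 := by linear_combination hsymm'
    rcases mul_eq_zero.mp hfac with h | h
    · exact absurd (sub_eq_zero.mp h) hc
    · exact inner_self_eq_zero.mp h
  have hcl := Submodule.orthogonal_orthogonal_eq_closure K
  rw [hKbot, Submodule.bot_orthogonal_eq_top] at hcl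
  exact Submodule.dense_iff_topologicalClosure_eq_top.mpr hcl.symm

/-- The ranges of `D₀ + i` and `D₀ - i` are dense in `H`. -/
theorem stmt1
    (H : ℕ → Type*) [∀ j, NormedAddCommGroup (H j)] [∀ j, InnerProductSpace ℂ (H j)]
    [∀ j, CompleteSpace (H j)]
    (Hlim : Type*) [NormedAddCommGroup Hlim] [InnerProductSpace ℂ Hlim] [CompleteSpace Hlim]
    (I : ∀ j k : ℕ, j ≤ k → H j →ₗᵢ[ℂ] H k) (J : ∀ j : ℕ, H j →ₗᵢ[ℂ] Hlim)
    (hI : ∀ (j k l : ℕ) (hjk : j ≤ k) (hkl : k ≤ l) (ξ : H j),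
      I k l hkl (I j k hjk ξ) = I j l (hjk.trans hkl) ξ)
    (hJ : ∀ (j k : ℕ) (hjk : j ≤ k) (ξ : H j), J k (I j k hjk ξ) = J j ξ)
    (hdense : Dense (⋃ j, Set.range (J j)))
    (D : ∀ j, H j →ₗ.[ℂ] H j)
    (hDdense : ∀ j, Dense ((D j).domain : Set (H j)))
    (hDsa : ∀ j, IsSelfAdjoint (D j))
    (hDcompat : ∀ (j k : ℕ) (hjk : j ≤ k) (ξ : (D j).domain),
      ∃ h : I j k hjk ξ ∈ (D k).domain, (D k) ⟨I j k hjk ξ, h⟩ = I j k hjk ((D j) ξ))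
    (D₀ : Hlim →ₗ.[ℂ] Hlim)
    (hdom : (D₀.domain : Set Hlim) = ⋃ j, (J j) '' ((D j).domain : Set (H j)))
    (hact : ∀ (j : ℕ) (ξ : (D j).domain) (h : J j ξ ∈ D₀.domain), D₀ ⟨J j ξ, h⟩ = J j ((D j) ξ))
    :
    Dense {y : Hlim | ∃ x : D₀.domain, y = D₀ x + Complex.I • (x : Hlim)} ∧
    Dense {y : Hlim | ∃ x : D₀.domain, y = D₀ x - Complex.I • (x : Hlim)} := by
  have key : ∀ c : ℂ, (starRingEnd ℂ) c ≠ c →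
      Dense {y : Hlim | ∃ x : D₀.domain, y = D₀ x + c • (x : Hlim)} := by
    intro c hc
    set S := {y : Hlim | ∃ x : D₀.domain, y = D₀ x + c • (x : Hlim)} with hS
    have hsub : (⋃ j, Set.range (J j)) ⊆ closure S := by
      rintro _ ⟨_, ⟨j, rfl⟩, η, rfl⟩
      have hdj : Dense {y : H j | ∃ ξ : (D j).domain, y = (D j) ξ + c • (ξ : H j)} :=
        aux_dense (hDsa j) hc
      have himg : (J j) '' {y : H j | ∃ ξ : (D j).domain, y = (D j) ξ + c • (ξ : H j)} ⊆ S := by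
        rintro _ ⟨_, ⟨ξ, rfl⟩, rfl⟩
        have hx : (J j ξ : Hlim) ∈ (D₀.domain : Set Hlim) :=
          hdom ▸ Set.mem_iUnion.mpr ⟨j, ⟨ξ, ξ.2, rfl⟩⟩
        refine ⟨⟨J j ξ, hx⟩, ?_⟩
        rw [hact j ξ hx, map_add, LinearIsometry.map_smul]
      have h1 : J j η ∈ closure ((J j) '' {y : H j | ∃ ξ : (D j).domain,
          y = (D j) ξ + c • (ξ : H j)}) :=
        image_closure_subset_closure_image (J j).continuous ⟨η, hdj η, rfl⟩
      exact closure_mono himg h1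
    have : Dense (closure S) := hdense.mono hsub
    rwa [dense_closure] at this
  constructor
  · exact key Complex.I (by norm_num [Complex.ext_iff])
  · have := key (-Complex.I) (by norm_num [Complex.ext_iff])
    simpa only [neg_smul, ← sub_eq_add_neg] using this
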